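/- arXiv:2510.26429 — 4 statements merged into one kernel-verified Lean document; each statement's English description precedes it below -/
import Mathlib

section
/- For every elementary inference system I and every atom A (possibly containing variables), A is provable in I if and only if its grounded version A↓ (obtained by replacing each variable x by a fresh constant c_x) is provable in I, where proof trees for A↓ are built over the extended signature F ∪ {c_x : x ∈ X}. -/
inductive Tm (F V : Type) : Type where
  | var : V → Tm F V
  | app : F → List (Tm F V) → Tm F V

namespace Tm

def subE {F F' V W : Type} (emb : F → F') (σ : V → Tm F' W) : Tm F V → Tm F' W
  | .var x => σ x
  | .app f ts => .app (emb f) (ts.attach.map (fun t => subE emb σ t.1))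
decreasing_by simp_wf; have := List.sizeOf_lt_of_mem t.2; omega

def eval {F V D : Type} (fn : F → List D → D) (v : V → D) : Tm F V → D
  | .var x => v x
  | .app f ts => fn f (ts.attach.map (fun t => eval fn v t.1))
decreasing_by simp_wf; have := List.sizeOf_lt_of_mem t.2; omega

def vars {F V : Type} : Tm F V → Set V
  | .var x => {x}
  | .app _ ts => (ts.attach.map (fun t => vars t.1)).foldr (· ∪ ·) ∅
decreasing_by simp_wf; have := List.sizeOf_lt_of_mem t.2; omega

def gr {F V : Type} : Tm F V → Tm (F ⊕ V) Empty :=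
  subE Sum.inl (fun x => .app (Sum.inr x) [])

def ungr {F V : Type} : Tm (F ⊕ V) Empty → Tm F V
  | .var e => e.elim
  | .app (Sum.inl f) ts => .app f (ts.attach.map (fun t => ungr t.1))
  | .app (Sum.inr x) _ => .var x
decreasing_by simp_wf; have := List.sizeOf_lt_of_mem t.2; omega

inductive WFg {F V : Type} : Tm (F ⊕ V) Empty → Prop where
  | inl {f : F} {ts : List (Tm (F ⊕ V) Empty)} (h : ∀ t ∈ ts, WFg t) :
      WFg (.app (Sum.inl f) ts)
  | inr {x : V} : WFg (.app (Sum.inr x) [])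

end Tm

structure Atm (F P V : Type) : Type where
  pred : P
  args : List (Tm F V)

def Atm.subE {F F' P V W : Type} (emb : F → F') (σ : V → Tm F' W) (A : Atm F P V) :
    Atm F' P W :=
  ⟨A.pred, A.args.map (Tm.subE emb σ)⟩

def Atm.gr {F P V : Type} : Atm F P V → Atm (F ⊕ V) P Empty :=
  Atm.subE Sum.inl (fun x => .app (Sum.inr x) [])

def Atm.vars {F P V : Type} (A : Atm F P V) : Set V :=
  A.args.foldr (fun t s => t.vars ∪ s) ∅

def Atm.Sat {F P V D : Type} (fn : F → List D → D) (pr : P → List D → Prop)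
    (v : V → D) (A : Atm F P V) : Prop :=
  pr A.pred (A.args.map (Tm.eval fn v))

structure Rule (F P V : Type) : Type where
  prems : List (Atm F P V)
  concl : Atm F P V

inductive Prov {F F' P V W : Type} (I : Set (Rule F P V)) (emb : F → F') :
    Atm F' P W → Prop where
  | step (ρ : Rule F P V) (hρ : ρ ∈ I) (σ : V → Tm F' W)
      (ih : ∀ B ∈ ρ.prems, Prov I emb (B.subE emb σ)) :
      Prov I emb (ρ.concl.subE emb σ)

def ModelsEIS {F P V D : Type} (fn : F → List D → D) (pr : P → List D → Prop)
    (I : Set (Rule F P V)) : Prop :=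
  ∀ ρ ∈ I, ∀ v : V → D,
    (∀ B ∈ ρ.prems, B.Sat fn pr v) → ρ.concl.Sat fn pr v

def QSat {V D : Type} [DecidableEq V] :
    List (Bool × V) → ((V → D) → Prop) → (V → D) → Prop
  | [], base, v => base v
  | (true, x) :: qs, base, v => ∀ d : D, QSat qs base (Function.update v x d)
  | (false, x) :: qs, base, v => ∃ d : D, QSat qs base (Function.update v x d)

def GT (F V : Type) : Type := {s : Tm (F ⊕ V) Empty // s.WFg}

def GT.app {F V : Type} (f : F) (ss : List (GT F V)) : GT F V :=
  ⟨.app (Sum.inl f) (ss.map Subtype.val), Tm.WFg.inl (by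
    intro t ht
    rcases List.mem_map.mp ht with ⟨u, _, rfl⟩
    exact u.2)⟩

def GT.cvar {F V : Type} (x : V) : GT F V := ⟨.app (Sum.inr x) [], Tm.WFg.inr⟩

/-- Interpretation of the extended signature `F ⊕ V` on well-formed ground terms. -/
def fnE (F V : Type) : (F ⊕ V) → List (GT F V) → GT F V
  | .inl f, ss => GT.app f ss
  | .inr x, _ => GT.cvar x

/-- Predicate interpretation of the grounded canonical model `M↓`:
a ground atom holds iff its ungrounding is provable in `I`. -/
def prE {F P V : Type} (I : Set (Rule F P V)) : P → List (GT F V) → Prop :=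
  fun Pd ss => Prov I (id : F → F) (⟨Pd, ss.map (fun s => s.1.ungr)⟩ : Atm F P V)

lemma Tm.ind' {F V : Type} {motive : Tm F V → Prop}
    (hv : ∀ x, motive (.var x))
    (ha : ∀ f ts, (∀ t ∈ ts, motive t) → motive (.app f ts)) :
    ∀ t, motive t := by
  intro t
  induction t using Tm.subE.induct with
  | case1 x => exact hv x
  | case2 f ts ih =>
      exact ha f ts (fun t ht => ih ⟨t, ht⟩)

lemma Tm.subE_var {F F' V W : Type} (emb : F → F') (σ : V → Tm F' W) (x : V) :
    Tm.subE emb σ (.var x) = σ x := by rw [Tm.subE]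

lemma Tm.subE_app {F F' V W : Type} (emb : F → F') (σ : V → Tm F' W) (f : F)
    (ts : List (Tm F V)) :
    Tm.subE emb σ (.app f ts) = .app (emb f) (ts.map (Tm.subE emb σ)) := by
  rw [Tm.subE]; simp

lemma Tm.ungr_app_inl {F V : Type} (f : F) (ts : List (Tm (F ⊕ V) Empty)) :
    Tm.ungr (.app (Sum.inl f) ts) = .app f (ts.map Tm.ungr) := by
  rw [Tm.ungr]; simp

lemma Tm.gr_subE {F V W : Type} (σ : V → Tm F W) (t : Tm F V) :
    (Tm.subE id σ t).gr = Tm.subE Sum.inl (fun x => (σ x).gr) t := by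
  induction t using Tm.ind' with
  | hv x => simp [Tm.subE_var]
  | ha f ts ih =>
      simp only [Tm.subE_app, Tm.gr, List.map_map, id]
      congr 1
      exact List.map_congr_left fun t ht => ih t ht

lemma Tm.ungr_subE {F V : Type} (σ : V → Tm (F ⊕ V) Empty) (t : Tm F V) :
    (Tm.subE Sum.inl σ t).ungr = Tm.subE id (fun x => (σ x).ungr) t := by
  induction t using Tm.ind' with
  | hv x => simp [Tm.subE_var]
  | ha f ts ih =>
      simp only [Tm.subE_app, Tm.ungr_app_inl, List.map_map, id]
      congr 1
      exact List.map_congr_left fun t ht => ih t ht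

lemma Tm.ungr_gr {F V : Type} (t : Tm F V) : t.gr.ungr = t := by
  induction t using Tm.ind' with
  | hv x => simp [Tm.gr, Tm.subE_var, Tm.ungr]
  | ha f ts ih =>
      simp only [Tm.gr, Tm.subE_app, Tm.ungr_app_inl, List.map_map]
      congr 1
      conv_rhs => rw [← List.map_id ts]
      exact List.map_congr_left fun t ht => ih t ht

def Atm.ungr {F P V : Type} (A : Atm (F ⊕ V) P Empty) : Atm F P V :=
  ⟨A.pred, A.args.map Tm.ungr⟩

lemma Atm.gr_subE {F P V W : Type} (σ : V → Tm F W) (B : Atm F P V) :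
    (B.subE id σ).gr = B.subE Sum.inl (fun x => (σ x).gr) := by
  simp [Atm.gr, Atm.subE, List.map_map, Function.comp]
  exact fun t _ => Tm.gr_subE σ t

lemma Atm.ungr_subE {F P V : Type} (σ : V → Tm (F ⊕ V) Empty) (B : Atm F P V) :
    (B.subE Sum.inl σ).ungr = B.subE id (fun x => (σ x).ungr) := by
  simp [Atm.ungr, Atm.subE, List.map_map, Function.comp]
  exact fun t _ => Tm.ungr_subE σ t

lemma Atm.ungr_gr {F P V : Type} (A : Atm F P V) : A.gr.ungr = A := by
  cases A with
  | mk p args =>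
    simp only [Atm.ungr, Atm.gr, Atm.subE, List.map_map, Atm.mk.injEq, true_and]
    conv_rhs => rw [← List.map_id args]
    exact List.map_congr_left fun t _ => Tm.ungr_gr t

/-- an atom is provable in `I` iff its grounded version is provable in `I`
over the extended signature `F ∪ {c_x : x ∈ X}`. -/
theorem stmt4 {F P V : Type} (I : Set (Rule F P V)) (A : Atm F P V) :
    Prov I (id : F → F) A ↔ Prov I (Sum.inl : F → F ⊕ V) A.gr := by
  constructor
  · intro h
    induction h with
    | step ρ hρ σ ih ih2 =>
        rw [Atm.gr_subE]
        exact Prov.step ρ hρ _ (fun B hB => by rw [← Atm.gr_subE]; exact ih2 B hB)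
  · intro h
    have : ∀ C : Atm (F ⊕ V) P Empty, Prov I Sum.inl C → Prov I (id : F → F) C.ungr := by
      intro C hC
      induction hC with
      | step ρ hρ σ ih ih2 =>
          rw [Atm.ungr_subE]
          exact Prov.step ρ hρ _ (fun B hB => by rw [← Atm.ungr_subE]; exact ih2 B hB)
    have := this _ h
    rwa [Atm.ungr_gr] at this
end

section
/- Let I be an elementary inference system, M_V the V-Herbrand canonical model (domain: all terms over (F, X), predicate P true on (t₁,…,tₙ) iff P(t₁,…,tₙ) is provable in I), and M↓ the grounded canonical Herbrand model (domain: ground terms over F ∪ {c_x : x ∈ X}, predicate P true on (s₁,…,sₙ) iff P(s₁↑,…,sₙ↑) is provable in I). Then for every first-order formula F' over (F, Π, X): M_V ⊨ F' if and only if M↓ ⊨ F'. -/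
inductive Fml (F P V : Type) : Type where
  | atom : Atm F P V → Fml F P V
  | falsum : Fml F P V
  | conj : Fml F P V → Fml F P V → Fml F P V
  | disj : Fml F P V → Fml F P V → Fml F P V
  | imp : Fml F P V → Fml F P V → Fml F P V
  | neg : Fml F P V → Fml F P V
  | all : V → Fml F P V → Fml F P V
  | ex : V → Fml F P V → Fml F P V

def Fml.Sat {F P V D : Type} [DecidableEq V] (fn : F → List D → D)
    (pr : P → List D → Prop) : (V → D) → Fml F P V → Prop
  | v, .atom A => A.Sat fn pr v
  | _, .falsum => False
  | v, .conj φ ψ => Fml.Sat fn pr v φ ∧ Fml.Sat fn pr v ψ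
  | v, .disj φ ψ => Fml.Sat fn pr v φ ∨ Fml.Sat fn pr v ψ
  | v, .imp φ ψ => Fml.Sat fn pr v φ → Fml.Sat fn pr v ψ
  | v, .neg φ => ¬ Fml.Sat fn pr v φ
  | v, .all x φ => ∀ d : D, Fml.Sat fn pr (Function.update v x d) φ
  | v, .ex x φ => ∃ d : D, Fml.Sat fn pr (Function.update v x d) φ

def Fml.free {F P V : Type} : Fml F P V → Set V
  | .atom A => A.vars
  | .falsum => ∅
  | .conj φ ψ => φ.free ∪ ψ.free
  | .disj φ ψ => φ.free ∪ ψ.free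
  | .imp φ ψ => φ.free ∪ ψ.free
  | .neg φ => φ.free
  | .all x φ => φ.free \ {x}
  | .ex x φ => φ.free \ {x}


namespace Stmt7Aux

open Tm

theorem wfg_gr {F V : Type} (t : Tm F V) : (gr t).WFg := by
  match t with
  | .var x => rw [gr, subE]; exact WFg.inr
  | .app f ts =>
    rw [gr, subE]
    refine WFg.inl ?_
    intro s hs
    rcases List.mem_map.mp hs with ⟨⟨u, hu⟩, _, rfl⟩
    exact wfg_gr u
decreasing_by simp; have := List.sizeOf_lt_of_mem hu; omega

theorem ungr_gr {F V : Type} (t : Tm F V) : (gr t).ungr = t := by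
  match t with
  | .var x => rw [gr, subE, ungr]
  | .app f ts =>
    have ih : ∀ u ∈ ts, (gr u).ungr = u := fun u hu => ungr_gr u
    rw [gr, subE, ungr]
    congr 1
    calc ((ts.attach.map (fun t => gr t.1)).attach.map (fun t => ungr t.1))
        = ts.map (fun u => (gr u).ungr) := by simp [gr]
      _ = ts.map id := List.map_congr_left ih
      _ = ts := List.map_id ts
decreasing_by simp; have := List.sizeOf_lt_of_mem hu; omega

theorem gr_ungr {F V : Type} (s : Tm (F ⊕ V) Empty) (hs : s.WFg) : gr s.ungr = s := by
  match s, hs with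
  | .app (Sum.inl f) ts, .inl h =>
    have ih : ∀ u ∈ ts, gr (ungr u) = u := fun u hu => gr_ungr u (h u hu)
    rw [ungr, gr, subE]
    congr 1
    calc ((ts.attach.map (fun t => ungr t.1)).attach.map (fun t => gr t.1))
        = ts.map (fun u => gr (ungr u)) := by simp
      _ = ts.map id := List.map_congr_left ih
      _ = ts := List.map_id ts
  | .app (Sum.inr x) _, .inr => rw [ungr, gr, subE]
decreasing_by simp; have := List.sizeOf_lt_of_mem hu; omega

/-- the iso `Tm F V ≃ GT F V` -/
def iota {F V : Type} (t : Tm F V) : GT F V := ⟨gr t, wfg_gr t⟩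

theorem eval_gr {F V : Type} (v : V → Tm F V) (w : V → GT F V)
    (hw : ∀ x, (w x).1 = gr (v x)) (t : Tm F V) :
    (Tm.eval (fun f ss => GT.app f ss) w t).1 = gr (Tm.eval Tm.app v t) := by
  match t with
  | .var x => rw [Tm.eval, Tm.eval]; exact hw x
  | .app f ts =>
    have ih : ∀ u ∈ ts, (Tm.eval (fun f ss => GT.app f ss) w u).1
        = gr (Tm.eval Tm.app v u) := fun u hu => eval_gr v w hw u
    rw [Tm.eval, Tm.eval, gr, subE]
    show Tm.app (Sum.inl f) _ = Tm.app (Sum.inl f) _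
    congr 1
    calc ((ts.attach.map (fun t => Tm.eval (fun f ss => GT.app f ss) w t.1)).map Subtype.val)
        = ts.map (fun u => (Tm.eval (fun f ss => GT.app f ss) w u).1) := by simp; exact List.map_map
      _ = ts.map (fun u => gr (Tm.eval Tm.app v u)) := List.map_congr_left ih
      _ = _ := by simp [gr]
decreasing_by simp; have := List.sizeOf_lt_of_mem hu; omega

theorem sat_iff {F P V : Type} [DecidableEq V] (I : Set (Rule F P V)) (phi : Fml F P V)
    (v : V → Tm F V) (w : V → GT F V) (hw : ∀ x, (w x).1 = gr (v x)) :
    phi.Sat Tm.app (fun Pd ts => Prov I (id : F → F) (⟨Pd, ts⟩ : Atm F P V)) v ↔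
    phi.Sat (fun f ss => GT.app f ss) (prE I) w := by
  induction phi generalizing v w with
  | atom A =>
    show Atm.Sat _ _ _ _ ↔ Atm.Sat _ _ _ _
    unfold Atm.Sat prE
    have : (A.args.map (Tm.eval (fun f ss => GT.app f ss) w)).map (fun s => s.1.ungr)
        = A.args.map (Tm.eval Tm.app v) := by
      rw [List.map_map]
      refine List.map_congr_left fun u hu => ?_
      show (Tm.eval (fun f ss => GT.app f ss) w u).1.ungr = _
      rw [eval_gr v w hw u, ungr_gr]
    rw [this]
  | falsum => exact Iff.rfl
  | conj a b iha ihb => exact and_congr (iha v w hw) (ihb v w hw)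
  | disj a b iha ihb => exact or_congr (iha v w hw) (ihb v w hw)
  | imp a b iha ihb => exact imp_congr (iha v w hw) (ihb v w hw)
  | neg a iha => exact not_congr (iha v w hw)
  | all x a iha =>
    constructor
    · intro h d
      refine (iha (Function.update v x d.1.ungr) (Function.update w x d) ?_).mp (h _)
      intro y
      by_cases hy : y = x
      · subst hy; simp [gr_ungr d.1 d.2]
      · simp [Function.update_of_ne hy, hw y]
    · intro h d
      refine (iha (Function.update v x d) (Function.update w x (iota d)) ?_).mpr (h _)
      intro y
      by_cases hy : y = x
      · subst hy; simp only [Function.update_self]; rfl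
      · simp [Function.update_of_ne hy, hw y]
  | ex x a iha =>
    constructor
    · rintro ⟨d, h⟩
      refine ⟨iota d, (iha (Function.update v x d) (Function.update w x (iota d)) ?_).mp h⟩
      intro y
      by_cases hy : y = x
      · subst hy; simp only [Function.update_self]; rfl
      · simp [Function.update_of_ne hy, hw y]
    · rintro ⟨d, h⟩
      refine ⟨d.1.ungr, (iha (Function.update v x d.1.ungr) (Function.update w x d) ?_).mpr h⟩
      intro y
      by_cases hy : y = x
      · subst hy; simp [gr_ungr d.1 d.2]
      · simp [Function.update_of_ne hy, hw y]

end Stmt7Aux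

/-- the V-Herbrand canonical model `M_V` (domain: all terms, `P` true iff
provable in `I`) and the grounded canonical Herbrand model `M↓` (domain: ground terms
over the extended signature, `P` true iff the ungrounded atom is provable in `I`)
satisfy exactly the same first-order sentences over `(F, Π, X)`. -/
theorem stmt7 {F P V : Type} [DecidableEq V] [Nonempty V] (I : Set (Rule F P V))
    (φ : Fml F P V) (hcl : φ.free = ∅) :
    (∀ v : V → Tm F V,
        φ.Sat Tm.app (fun Pd ts => Prov I (id : F → F) (⟨Pd, ts⟩ : Atm F P V)) v) ↔
    (∀ w : V → GT F V, φ.Sat (fun f ss => GT.app f ss) (prE I) w) := by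
  constructor
  · intro h w
    exact (Stmt7Aux.sat_iff I φ (fun x => (w x).1.ungr) w
      (fun x => (Stmt7Aux.gr_ungr (w x).1 (w x).2).symm)).mp (h _)
  · intro h v
    exact (Stmt7Aux.sat_iff I φ v (fun x => Stmt7Aux.iota (v x)) (fun _ => rfl)).mpr (h _)
end

section
/- Let I be an elementary inference system and A₁,…,Aₙ atoms with variables x⃗ = x₁,…,x_k. Then the grounded canonical model M↓ satisfies (∀x⃗)(A₁ ∧ ⋯ ∧ Aₙ) if and only if M↓ satisfies the ground conjunction A₁↓ ∧ ⋯ ∧ Aₙ↓, where each Aᵢ↓ replaces every variable x by the constant c_x. -/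
namespace Aux
open Tm

theorem subE_subE {F F' F'' V W U : Type} (emb : F → F') (σ : V → Tm F' W)
    (emb' : F' → F'') (τ : W → Tm F'' U) (t : Tm F V) :
    (t.subE emb σ).subE emb' τ = t.subE (emb' ∘ emb) (fun x => (σ x).subE emb' τ) := by
  induction t using Tm.subE.induct with
  | case1 x => simp [Tm.subE]
  | case2 f ts ih =>
    simp only [Tm.subE, List.map_subtype, List.unattach_attach, List.map_map]
    congr 1
    refine List.map_congr_left ?_
    intro t ht
    exact ih ⟨t, ht⟩

theorem subE_id {F V : Type} (t : Tm F V) : t.subE id Tm.var = t := by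
  induction t using Tm.subE.induct with
  | case1 x => simp [Tm.subE]
  | case2 f ts ih =>
    simp only [Tm.subE, List.map_subtype, List.unattach_attach, id_eq]
    congr 1
    refine List.map_congr_left ?_ |>.trans (List.map_id _)
    intro t ht
    exact ih ⟨t, ht⟩

theorem ungr_eval {F V : Type} (v : V → GT F V) (t : Tm F V) :
    ((Tm.eval (fnE F V) v (t.subE Sum.inl Tm.var)).1).ungr
      = t.subE id (fun x => (v x).1.ungr) := by
  induction t using Tm.subE.induct with
  | case1 x => simp [Tm.subE, Tm.eval]
  | case2 f ts ih =>
    simp only [Tm.subE, Tm.eval, List.map_subtype, List.unattach_attach, List.map_map]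
    show (GT.app f _).1.ungr = _
    simp only [GT.app, Tm.ungr, List.map_subtype, List.unattach_attach, List.map_map]
    congr 1
    erw [List.map_map, List.map_map]
    refine List.map_congr_left ?_
    intro t ht
    exact ih ⟨t, ht⟩

theorem atm_subE_subE {F P V W U : Type} (σ : V → Tm F W) (τ : W → Tm F U)
    (A : Atm F P V) :
    (A.subE id σ).subE id τ = A.subE id (fun x => (σ x).subE id τ) := by
  simp only [Atm.subE, List.map_map]
  congr 1
  refine List.map_congr_left (fun t _ => ?_)
  simpa using subE_subE id σ id τ t

theorem atm_subE_id {F P V : Type} (A : Atm F P V) : A.subE id Tm.var = A := by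
  cases A with
  | mk p args =>
    simp only [Atm.subE]
    congr 1
    exact (List.map_congr_left (fun t _ => subE_id t)).trans (List.map_id _)

theorem prov_sub {F P V W : Type} {I : Set (Rule F P V)} {A : Atm F P W}
    (h : Prov I id A) (τ : W → Tm F W) : Prov I id (A.subE id τ) := by
  induction h with
  | step ρ hρ σ ih ih2 =>
    rw [atm_subE_subE]
    refine Prov.step ρ hρ _ (fun B hB => ?_)
    rw [← atm_subE_subE]
    exact ih2 B hB

theorem sat_iff {F P V : Type} (I : Set (Rule F P V)) (v : V → GT F V) (A : Atm F P V) :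
    (A.subE Sum.inl Tm.var).Sat (fnE F V) (prE I) v ↔
      Prov I id (A.subE id (fun x => (v x).1.ungr)) := by
  cases A with
  | mk p args =>
    simp only [Atm.Sat, Atm.subE, prE, List.map_map]
    constructor <;> (intro h; convert h using 2) <;>
      exact (List.map_congr_left (fun t _ => (ungr_eval v t).symm))
      |>.trans rfl |>.symm ▸ rfl

end Aux

/-- in the grounded canonical model, a universally quantified conjunction
of atoms holds iff the fully grounded conjunction (each variable `x` replaced by the
constant `c_x`) holds. -/

theorem stmt9 {F P V : Type} (I : Set (Rule F P V)) (As : List (Atm F P V)) :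
    (∀ v : V → GT F V, ∀ A ∈ As, (A.subE Sum.inl Tm.var).Sat (fnE F V) (prE I) v) ↔
    (∀ A ∈ As,
      (A.subE Sum.inl Tm.var).Sat (fnE F V) (prE I) (fun x => GT.cvar x)) := by
  constructor
  · intro h A hA
    exact h _ A hA
  · intro h v A hA
    rw [Aux.sat_iff]
    have h1 := (Aux.sat_iff I (fun x => GT.cvar x) A).mp (h A hA)
    have : A.subE id (fun x => ((GT.cvar x : GT F V)).1.ungr) = A := by
      have : (fun x => ((GT.cvar x : GT F V)).1.ungr) = (Tm.var : V → Tm F V) := by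
        funext x; simp [GT.cvar, Tm.ungr]
      rw [this, Aux.atm_subE_id]
    rw [this] at h1
    exact Aux.prov_sub h1 _
end

section
/- Let I be an elementary inference system and, for 1 ≤ i ≤ m, 1 ≤ j ≤ nᵢ, let A_{ij} be atoms with variables x₁,…,x_k. If the grounded canonical model M↓ satisfies the ground formula ⋁ᵢ ⋀ⱼ A_{ij}↓ (each variable x replaced by c_x), then M↓ satisfies the universally quantified formula (∀x₁)⋯(∀x_k) ⋁ᵢ ⋀ⱼ A_{ij}. -/
namespace Stmt10Aux

theorem subE_app {F F' V W : Type} (emb : F → F') (σ : V → Tm F' W) (f : F)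
    (ts : List (Tm F V)) :
    Tm.subE emb σ (.app f ts) = .app (emb f) (ts.map (Tm.subE emb σ)) := by
  rw [Tm.subE]
  simp [List.map_attach_eq_pmap]

theorem eval_app {F V D : Type} (fn : F → List D → D) (v : V → D) (f : F)
    (ts : List (Tm F V)) :
    Tm.eval fn v (.app f ts) = fn f (ts.map (Tm.eval fn v)) := by
  rw [Tm.eval]
  simp [List.map_attach_eq_pmap]

theorem ungr_app {F V : Type} (f : F) (ts : List (Tm (F ⊕ V) Empty)) :
    Tm.ungr (.app (Sum.inl f) ts) = .app f (ts.map Tm.ungr) := by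
  rw [Tm.ungr]
  simp [List.map_attach_eq_pmap]

theorem subE_subE {F F' F'' V W W' : Type} (emb : F → F') (emb' : F' → F'')
    (σ : V → Tm F' W) (τ : W → Tm F'' W') :
    ∀ t : Tm F V, (t.subE emb σ).subE emb' τ
      = t.subE (fun f => emb' (emb f)) (fun x => (σ x).subE emb' τ)
  | .var x => by simp [Tm.subE]
  | .app f ts => by
    rw [subE_app, subE_app, subE_app, List.map_map]
    congr 1
    apply List.map_congr_left
    intro t ht
    exact subE_subE emb emb' σ τ t
termination_by t => sizeOf t
decreasing_by simp_wf; have := List.sizeOf_lt_of_mem ht; omega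

theorem atmSubE_subE {F F' F'' P V W W' : Type} (emb : F → F') (emb' : F' → F'')
    (σ : V → Tm F' W) (τ : W → Tm F'' W') (A : Atm F P V) :
    (A.subE emb σ).subE emb' τ
      = A.subE (fun f => emb' (emb f)) (fun x => (σ x).subE emb' τ) := by
  simp only [Atm.subE, List.map_map, Function.comp]
  congr 1
  apply List.map_congr_left
  intro t _
  exact subE_subE emb emb' σ τ t

/-- Provability is stable under substitution. -/
theorem Prov_sub {F F' P V W W' : Type} {I : Set (Rule F P V)} {emb : F → F'}
    {A : Atm F' P W} (h : Prov I emb A) (τ : W → Tm F' W') :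
    Prov I emb (A.subE id τ) := by
  induction h with
  | step ρ hρ σ _ ih =>
    rw [atmSubE_subE]
    have hemb : (fun f => id (emb f)) = emb := rfl
    rw [hemb]
    exact Prov.step ρ hρ _ (fun B hB => by
      have := ih B hB
      rwa [atmSubE_subE, hemb] at this)

/-- Evaluating the embedded term and ungrounding equals substituting by ungrounded values. -/
theorem key {F V : Type} (v : V → GT F V) :
    ∀ t : Tm F V, (Tm.eval (fnE F V) v (t.subE Sum.inl Tm.var)).1.ungr
      = t.subE id (fun x => (v x).1.ungr)
  | .var x => by simp [Tm.subE, Tm.eval]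
  | .app f ts => by
    rw [subE_app, eval_app, subE_app]
    show (GT.app f _).1.ungr = _
    rw [GT.app, ungr_app]
    erw [List.map_map, List.map_map, List.map_map]
    congr 1
    apply List.map_congr_left
    intro t ht
    exact key v t
termination_by t => sizeOf t
decreasing_by simp_wf; have := List.sizeOf_lt_of_mem ht; omega

theorem sat_iff {F P V : Type} (I : Set (Rule F P V)) (A : Atm F P V) (v : V → GT F V) :
    (A.subE Sum.inl Tm.var).Sat (fnE F V) (prE I) v
      ↔ Prov I (id : F → F) (A.subE id (fun x => (v x).1.ungr)) := by
  have hargs : A.args.map (fun t =>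
        (Tm.eval (fnE F V) v (t.subE Sum.inl Tm.var)).1.ungr)
      = A.args.map (Tm.subE id fun x => (v x).1.ungr) :=
    List.map_congr_left (fun t _ => key v t)
  unfold Atm.Sat prE Atm.subE
  simp only [List.map_map, Function.comp_def]
  rw [hargs]

end Stmt10Aux

/-- in the grounded canonical model, if the fully grounded disjunction of
conjunctions of atoms holds (each variable `x` replaced by `c_x`), then the universally
quantified disjunction of conjunctions holds. -/
theorem stmt10 {F P V : Type} (I : Set (Rule F P V)) (Ass : List (List (Atm F P V)))
    (h : ∃ C ∈ Ass, ∀ A ∈ C,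
        (A.subE Sum.inl Tm.var).Sat (fnE F V) (prE I) (fun x => GT.cvar x)) :
    ∀ v : V → GT F V, ∃ C ∈ Ass, ∀ A ∈ C,
        (A.subE Sum.inl Tm.var).Sat (fnE F V) (prE I) v := by
  intro v
  obtain ⟨C, hC, hA⟩ := h
  refine ⟨C, hC, fun A hAC => ?_⟩
  rw [Stmt10Aux.sat_iff]
  have h1 := (Stmt10Aux.sat_iff I A (fun x => GT.cvar x)).mp (hA A hAC)
  have h2 := Stmt10Aux.Prov_sub h1 (fun x => (v x).1.ungr)
  rw [Stmt10Aux.atmSubE_subE] at h2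
  convert h2 using 2
  · rfl
  funext x
  simp [GT.cvar, Tm.ungr, Tm.subE]
end
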